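/- Decomposition theorem: (A) For every generalized quasiorder ρ ⊆ A^m, the factor relation ρ/ρ^⟨2⟩ on A/ρ^⟨2⟩ is a weak generalized partial order, and ρ = {(a₁,…,a_m) : ([a₁],…,[a_m]) ∈ ρ/ρ^⟨2⟩} where [a] is the ρ^⟨2⟩-class of a. (B) Conversely, given an equivalence relation σ on A and a weak generalized partial order τ on A/σ, the relation ρ := {(a₁,…,a_m) : ([a₁]_σ,…,[a_m]_σ) ∈ τ} is a generalized quasiorder with ρ^⟨2⟩ = σ and ρ/ρ^⟨2⟩ = τ. -/
import Mathlib


def IsGenTransitive {A : Type*} {m : ℕ} (ρ : Set (Fin m → A)) : Prop :=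
  ∀ M : Fin m → Fin m → A,
    (∀ i, (fun j => M i j) ∈ ρ) → (∀ j, (fun i => M i j) ∈ ρ) →
    (fun i => M i i) ∈ ρ

def IsGQuord {A : Type*} {m : ℕ} (ρ : Set (Fin m → A)) : Prop :=
  (∀ a : A, (fun _ => a) ∈ ρ) ∧ IsGenTransitive ρ

/-- a and b are exchangeable with respect to ρ: replacing a by b at any single
coordinate of any tuple preserves membership in ρ. -/
def Exch {A : Type*} {m : ℕ} (ρ : Set (Fin m → A)) (a b : A) : Prop :=
  ∀ (i : Fin m) (t : Fin m → A),
    Function.update t i a ∈ ρ ↔ Function.update t i b ∈ ρ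

/-- A binary relation ψ has the exchange property w.r.t. ρ. -/
def ExchProp {A : Type*} {m : ℕ} (ψ : A → A → Prop) (ρ : Set (Fin m → A)) : Prop :=
  ∀ a b : Fin m → A, a ∈ ρ → (∀ i, ψ (a i) (b i)) → b ∈ ρ

lemma exch_symm {A : Type*} {m : ℕ} {ρ : Set (Fin m → A)} {a b : A}
    (h : Exch ρ a b) : Exch ρ b a := fun i t => (h i t).symm

lemma exch_rep {A : Type*} {m : ℕ} {ρ : Set (Fin m → A)} {a b : Fin m → A}
    (h : ∀ i, Exch ρ (a i) (b i)) (ha : a ∈ ρ) : b ∈ ρ := by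
  have key : ∀ S : Finset (Fin m), (fun i => if i ∈ S then b i else a i) ∈ ρ := by
    intro S
    induction S using Finset.induction with
    | empty => simpa using ha
    | @insert j S hj ih =>
      have h1 : (fun i => if i ∈ insert j S then b i else a i)
          = Function.update (fun i => if i ∈ S then b i else a i) j (b j) := by
        funext i
        by_cases hij : i = j
        · subst hij; simp
        · simp [Function.update, hij, Finset.mem_insert]
      have h2 : (fun i => if i ∈ S then b i else a i)
          = Function.update (fun i => if i ∈ S then b i else a i) j (a j) := by
        funext i
        by_cases hij : i = j
        · subst hij; simp [hj]
        · simp [Function.update, hij]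
      rw [h1]
      exact (h j j (fun i => if i ∈ S then b i else a i)).mp (h2 ▸ ih)
  have := key Finset.univ
  simpa using this

lemma update_mk {A : Type*} {m : ℕ} (s : Setoid A) (t : Fin m → A) (i : Fin m) (a : A) :
    (fun j => Quotient.mk s (Function.update t i a j))
      = Function.update (fun j => Quotient.mk s (t j)) i (Quotient.mk s a) := by
  funext j
  by_cases h : j = i
  · subst h; simp
  · simp [Function.update, h]

theorem gQuord_decomposition {A : Type*} {m : ℕ} :
    (∀ (ρ : Set (Fin m → A)) (s : Setoid A), IsGQuord ρ →
      (∀ a b : A, s.r a b ↔ Exch ρ a b) →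
        IsGQuord {B : Fin m → Quotient s | ∃ a ∈ ρ, ∀ i, B i = Quotient.mk s (a i)} ∧
        (∀ x y : Quotient s,
          Exch {B : Fin m → Quotient s | ∃ a ∈ ρ, ∀ i, B i = Quotient.mk s (a i)} x y →
            x = y) ∧
        (∀ a : Fin m → A, a ∈ ρ ↔
          (fun i => Quotient.mk s (a i)) ∈
            {B : Fin m → Quotient s | ∃ a ∈ ρ, ∀ i, B i = Quotient.mk s (a i)})) ∧
    (∀ (σ : Setoid A) (τ : Set (Fin m → Quotient σ)), IsGQuord τ →
      (∀ x y : Quotient σ, Exch τ x y → x = y) →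
        IsGQuord {a : Fin m → A | (fun i => Quotient.mk σ (a i)) ∈ τ} ∧
        (∀ a b : A,
          Exch {a : Fin m → A | (fun i => Quotient.mk σ (a i)) ∈ τ} a b ↔ σ.r a b) ∧
        {B : Fin m → Quotient σ |
          ∃ a ∈ {a : Fin m → A | (fun i => Quotient.mk σ (a i)) ∈ τ},
            ∀ i, B i = Quotient.mk σ (a i)} = τ) := by
  constructor
  · -- Part A
    intro ρ s hρ hs
    set Q : Set (Fin m → Quotient s) :=
      {B : Fin m → Quotient s | ∃ a ∈ ρ, ∀ i, B i = Quotient.mk s (a i)} with hQ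
    have mem_iff : ∀ a : Fin m → A, a ∈ ρ ↔ (fun i => Quotient.mk s (a i)) ∈ Q := by
      intro a
      constructor
      · intro ha; exact ⟨a, ha, fun i => rfl⟩
      · rintro ⟨c, hc, hac⟩
        refine exch_rep (fun i => ?_) hc
        have : s.r (c i) (a i) :=
          s.symm (Quotient.exact (s := s) (hac i))
        exact (hs _ _).mp this
    have hQgq : IsGQuord Q := by
      constructor
      · intro x
        obtain ⟨a, rfl⟩ := Quotient.exists_rep x
        exact ⟨fun _ => a, hρ.1 a, fun i => rfl⟩
      · intro M hrow hcol
        choose a ha hMa using hrow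
        choose c hc hMc using hcol
        have hcols : ∀ j, (fun i => a i j) ∈ ρ := by
          intro j
          refine exch_rep (fun i => ?_) (hc j)
          have : Quotient.mk s (c j i) = Quotient.mk s (a i j) :=
            (hMc j i).symm.trans (hMa i j)
          exact (hs _ _).mp (Quotient.exact (s := s) this)
        have hdiag : (fun i => a i i) ∈ ρ := hρ.2 a ha hcols
        exact ⟨fun i => a i i, hdiag, fun i => hMa i i⟩
    refine ⟨hQgq, ?_, mem_iff⟩
    intro x y hxy
    obtain ⟨a, rfl⟩ := Quotient.exists_rep x
    obtain ⟨b, rfl⟩ := Quotient.exists_rep y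
    refine Quotient.sound ((hs a b).mpr ?_)
    intro i t
    have key : ∀ u : A, Function.update t i u ∈ ρ ↔
        Function.update (fun j => Quotient.mk s (t j)) i (Quotient.mk s u) ∈ Q := by
      intro u
      rw [mem_iff, update_mk]
    rw [key a, key b]
    exact hxy i (fun j => Quotient.mk s (t j))
  · -- Part B
    intro σ τ hτ hweak
    set P : Set (Fin m → A) := {a : Fin m → A | (fun i => Quotient.mk σ (a i)) ∈ τ}
      with hP
    have memP : ∀ a : Fin m → A, a ∈ P ↔ (fun i => Quotient.mk σ (a i)) ∈ τ :=
      fun a => Iff.rfl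
    have hPgq : IsGQuord P := by
      constructor
      · intro a
        exact hτ.1 (Quotient.mk σ a)
      · intro M hrow hcol
        exact hτ.2 (fun i j => Quotient.mk σ (M i j)) hrow hcol
    have key : ∀ (t : Fin m → A) (i : Fin m) (u : A),
        Function.update t i u ∈ P ↔
        Function.update (fun j => Quotient.mk σ (t j)) i (Quotient.mk σ u) ∈ τ := by
      intro t i u
      rw [memP, update_mk]
    refine ⟨hPgq, ?_, ?_⟩
    · intro a b
      constructor
      · intro hex
        have hq : Exch τ (Quotient.mk σ a) (Quotient.mk σ b) := by
          intro i T
          have hT : (fun j => Quotient.mk σ (Quotient.out (T j))) = T :=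
            funext fun j => Quotient.out_eq (T j)
          rw [← hT, ← key, ← key]
          exact hex i _
        exact Quotient.exact (s := σ) (hweak _ _ hq)
      · intro hab i t
        have : Quotient.mk σ a = Quotient.mk σ b := Quotient.sound hab
        rw [key, key, this]
    · ext B
      constructor
      · rintro ⟨a, ha, hB⟩
        have : B = fun i => Quotient.mk σ (a i) := funext hB
        rw [this]; exact ha
      · intro hB
        refine ⟨fun i => Quotient.out (B i), ?_, fun i => (Quotient.out_eq (B i)).symm⟩
        show (fun i => Quotient.mk σ (Quotient.out (B i))) ∈ τ
        have : (fun i => Quotient.mk σ (Quotient.out (B i))) = B :=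
          funext fun i => Quotient.out_eq (B i)
        rw [this]; exact hB
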